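/- Let C ∈ ℝ^{n×n} be symmetric positive semidefinite, M ∈ ℝ^{n×p}, and D ∈ ℝ^{p×p} be such that the block matrix [[C, M],[Mᵀ, D]] is positive semidefinite. Let Σ_ω ∈ ℝ^{n×n} and Σ_ν ∈ ℝ^{p×p} be symmetric positive definite and let α₀ ≥ 0. If 0 = −2α₀C + Σ_ω − MΣ_ν⁻¹Mᵀ, then C is positive definite (nonsingular). -/

import Mathlib

open Matrix

/-- Let `C` be symmetric positive semidefinite, and suppose the
block matrix `[[C, M], [Mᵀ, D]]` is positive semidefinite. Let `Sω, Sν` be symmetric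
positive definite and `α₀ ≥ 0`. If `0 = −2α₀ C + Sω − M Sν⁻¹ Mᵀ`, then `C` is
positive definite (nonsingular). -/
theorem continuous_time_steady_covariance_nonsingular
    {n p : ℕ}
    (C : Matrix (Fin n) (Fin n) ℝ) (hC : C.PosSemidef)
    (M : Matrix (Fin n) (Fin p) ℝ) (D : Matrix (Fin p) (Fin p) ℝ)
    (hblock : (Matrix.fromBlocks C M Mᵀ D).PosSemidef)
    (Sω : Matrix (Fin n) (Fin n) ℝ) (hSω : Sω.PosDef)
    (Sν : Matrix (Fin p) (Fin p) ℝ) (hSν : Sν.PosDef)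
    (α₀ : ℝ) (hα₀ : 0 ≤ α₀)
    (heq : 0 = -((2 * α₀) • C) + Sω - M * Sν⁻¹ * Mᵀ) :
    C.PosDef := by
  refine posDef_iff_dotProduct_mulVec.mpr ⟨hC.1, fun x hx => ?_⟩
  rcases lt_or_eq_of_le ((posSemidef_iff_dotProduct_mulVec.mp hC).2 x) with h | h
  · simpa using h
  exfalso
  have hCx : C *ᵥ x = 0 := (hC.dotProduct_mulVec_zero_iff x).mp h.symm
  -- Show Mᵀ x = 0 using the block PSD condition
  set y : Fin p → ℝ := Mᵀ *ᵥ x with hy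
  set a : ℝ := y ⬝ᵥ y with ha
  set b : ℝ := y ⬝ᵥ D *ᵥ y with hb
  have key : ∀ t : ℝ, 0 ≤ 2 * t * a + t ^ 2 * b := by
    intro t
    have h0 := (posSemidef_iff_dotProduct_mulVec.mp hblock).2 (Sum.elim x (t • y))
    rw [show star (Sum.elim x (t • y)) = Sum.elim x (t • y) from rfl,
      fromBlocks_mulVec] at h0
    simp only [Sum.elim_comp_inl, Sum.elim_comp_inr] at h0
    rw [sumElim_dotProduct_sumElim] at h0
    have e1 : x ⬝ᵥ (C *ᵥ x + M *ᵥ (t • y)) = t * a := by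
      rw [hCx, zero_add, Matrix.mulVec_smul, dotProduct_smul,
        dotProduct_mulVec, ← Matrix.mulVec_transpose, ← hy, ha, smul_eq_mul]
    have e2 : (t • y) ⬝ᵥ (Mᵀ *ᵥ x + D *ᵥ (t • y)) = t * a + t ^ 2 * b := by
      rw [smul_dotProduct, dotProduct_add, ← hy, Matrix.mulVec_smul,
        dotProduct_smul, ← ha, ← hb, smul_eq_mul, smul_eq_mul, mul_add]
      ring
    rw [e1, e2] at h0
    linarith
  have hb0 : 0 ≤ b := by
    have := key 1; have := key (-1); linarith
  have ha0 : 0 ≤ a := by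
    rw [ha]; exact Finset.sum_nonneg fun i _ => mul_self_nonneg _
  have haz : a = 0 := by
    by_contra hne
    have hapos : 0 < a := lt_of_le_of_ne ha0 (Ne.symm hne)
    have hb1 : 0 < b + 1 := by linarith
    set t : ℝ := -(a / (b + 1)) with htdef
    have ht : t * (b + 1) = -a := by
      rw [htdef]; field_simp
    have hk := key t
    nlinarith [hk, ht, sq_nonneg t, mul_pos hapos hapos, mul_pos hb1 hb1]
  have hMx : Mᵀ *ᵥ x = 0 := by
    rw [← hy]; exact dotProduct_self_eq_zero.mp haz
  -- quadratic form of Sω at x is zero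
  have hSωeq : Sω = ((2 * α₀) • C) + M * Sν⁻¹ * Mᵀ := by
    ext i j
    have := congrFun (congrFun heq i) j
    simp only [Matrix.zero_apply, Matrix.add_apply, Matrix.sub_apply,
      Matrix.neg_apply, Matrix.smul_apply, smul_eq_mul] at this ⊢
    linarith
  have hq : star x ⬝ᵥ Sω *ᵥ x = 0 := by
    rw [show (star x : Fin n → ℝ) = x from rfl, hSωeq]
    rw [Matrix.add_mulVec, Matrix.smul_mulVec, hCx, smul_zero, zero_add,
      ← Matrix.mulVec_mulVec, ← Matrix.mulVec_mulVec, hMx]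
    simp
  exact ((posDef_iff_dotProduct_mulVec.mp hSω).2 hx).ne' hq
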